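/- Let B ∈ ℝ³, α ∈ ℝ, Δt ∈ ℝ, and v⁻ ∈ ℝ³. Define t := (α Δt / 2) · B, s := (2 / (1 + ‖t‖²)) · t, and v⁺ := v⁻ + (v⁻ + v⁻ × t) × s, where × denotes the cross product on ℝ³. Then v⁺ − v⁻ = (α Δt / 2) · ((v⁺ + v⁻) × B). In other words, the explicit Boris rotation formula solves the implicit rotation equation (v⁺ − v⁻)/Δt = (α/2)(v⁺ + v⁻) × B. -/

import Mathlib

/-- The cross product on `EuclideanSpace ℝ (Fin 3)`. -/
noncomputable def cross3 (a b : EuclideanSpace ℝ (Fin 3)) : EuclideanSpace ℝ (Fin 3) :=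
  WithLp.toLp 2 (crossProduct (a : Fin 3 → ℝ) (b : Fin 3 → ℝ) : Fin 3 → ℝ)

lemma cross3_apply0 (a b : EuclideanSpace ℝ (Fin 3)) :
    cross3 a b 0 = a 1 * b 2 - a 2 * b 1 := by
  simp [cross3, crossProduct]
lemma cross3_apply1 (a b : EuclideanSpace ℝ (Fin 3)) :
    cross3 a b 1 = a 2 * b 0 - a 0 * b 2 := by
  simp [cross3, crossProduct]
lemma cross3_apply2 (a b : EuclideanSpace ℝ (Fin 3)) :
    cross3 a b 2 = a 0 * b 1 - a 1 * b 0 := by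
  simp [cross3, crossProduct]

set_option maxHeartbeats 2000000 in
/-- The explicit Boris rotation formula `v⁺ = v⁻ + (v⁻ + v⁻ × t) × s`, with
`t = (α Δt / 2) • B` and `s = (2 / (1 + ‖t‖²)) • t`, solves the implicit rotation equation
`v⁺ − v⁻ = (α Δt / 2) • ((v⁺ + v⁻) × B)`. -/
theorem boris_explicit_rotation_solves_implicit
    (B vminus : EuclideanSpace ℝ (Fin 3)) (α Δt : ℝ)
    (t s vplus : EuclideanSpace ℝ (Fin 3))
    (ht : t = (α * Δt / 2) • B)
    (hs : s = (2 / (1 + ‖t‖ ^ 2)) • t)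
    (hv : vplus = vminus + cross3 (vminus + cross3 vminus t) s) :
    vplus - vminus = (α * Δt / 2) • cross3 (vplus + vminus) B := by
  have hnorm : ‖t‖ ^ 2 = t 0 ^ 2 + t 1 ^ 2 + t 2 ^ 2 := by
    rw [EuclideanSpace.norm_eq, Real.sq_sqrt (by positivity)]
    simp [Fin.sum_univ_three, sq]
  have hden : (1 : ℝ) + (t 0 ^ 2 + t 1 ^ 2 + t 2 ^ 2) ≠ 0 := by positivity
  rw [hnorm] at hs
  have ht0 : t 0 = (α * Δt / 2) * B 0 := by rw [ht]; rfl
  have ht1 : t 1 = (α * Δt / 2) * B 1 := by rw [ht]; rfl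
  have ht2 : t 2 = (α * Δt / 2) * B 2 := by rw [ht]; rfl
  have hs0 : s 0 = (2 / (1 + (t 0 ^ 2 + t 1 ^ 2 + t 2 ^ 2))) * t 0 := by rw [hs]; rfl
  have hs1 : s 1 = (2 / (1 + (t 0 ^ 2 + t 1 ^ 2 + t 2 ^ 2))) * t 1 := by rw [hs]; rfl
  have hs2 : s 2 = (2 / (1 + (t 0 ^ 2 + t 1 ^ 2 + t 2 ^ 2))) * t 2 := by rw [hs]; rfl
  have hv0 : vplus 0 = vminus 0 + ((vminus 1 + (vminus 2 * t 0 - vminus 0 * t 2)) * s 2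
      - (vminus 2 + (vminus 0 * t 1 - vminus 1 * t 0)) * s 1) := by
    rw [hv]; simp only [PiLp.add_apply, cross3_apply0, cross3_apply1, cross3_apply2]
  have hv1 : vplus 1 = vminus 1 + ((vminus 2 + (vminus 0 * t 1 - vminus 1 * t 0)) * s 0
      - (vminus 0 + (vminus 1 * t 2 - vminus 2 * t 1)) * s 2) := by
    rw [hv]; simp only [PiLp.add_apply, cross3_apply0, cross3_apply1, cross3_apply2]
  have hv2 : vplus 2 = vminus 2 + ((vminus 0 + (vminus 1 * t 2 - vminus 2 * t 1)) * s 1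
      - (vminus 1 + (vminus 2 * t 0 - vminus 0 * t 2)) * s 0) := by
    rw [hv]; simp only [PiLp.add_apply, cross3_apply0, cross3_apply1, cross3_apply2]
  have h0 : (vplus - vminus) 0 = ((α * Δt / 2) • cross3 (vplus + vminus) B) 0 := by
    simp only [PiLp.sub_apply, PiLp.add_apply, PiLp.smul_apply, smul_eq_mul,
      cross3_apply0, hv0, hv1, hv2, hs0, hs1, hs2, ht0, ht1, ht2]
    field_simp
    ring
  have h1 : (vplus - vminus) 1 = ((α * Δt / 2) • cross3 (vplus + vminus) B) 1 := by
    simp only [PiLp.sub_apply, PiLp.add_apply, PiLp.smul_apply, smul_eq_mul,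
      cross3_apply1, hv0, hv1, hv2, hs0, hs1, hs2, ht0, ht1, ht2]
    field_simp
    ring
  have h2 : (vplus - vminus) 2 = ((α * Δt / 2) • cross3 (vplus + vminus) B) 2 := by
    simp only [PiLp.sub_apply, PiLp.add_apply, PiLp.smul_apply, smul_eq_mul,
      cross3_apply2, hv0, hv1, hv2, hs0, hs1, hs2, ht0, ht1, ht2]
    field_simp
    ring
  ext i
  fin_cases i
  · exact h0
  · exact h1
  · exact h2
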